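/- For every finitely supported permutation w, the Schubert polynomial 𝔖_w has the monomial-positive expansion 𝔖_w = Σ_{(i₁,…,i_k) ∈ Red(w)} (Z∘x_{i_k}∘R_{i_k})∘⋯∘(Z∘x_{i₁}∘R_{i₁}) applied to the constant polynomial 1, where the sum is over all reduced words of w. -/

import Mathlib

/-
Conventions: `Pol = MvPolynomial ℕ ℤ` with the Lean variable `X i` representing
the paper's variable `x_{i+1}` (0-indexed).  All operators carrying a paper index
`i ≥ 1` are represented by Lean operators indexed by `i : ℕ` (Lean `i` ↔ paper `i+1`),
and sequences of positive integers are represented by sequences of natural numbers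
(entry `v` ↔ paper entry `v+1`).
-/

open MvPolynomial
open scoped Classical

abbrev Pol := MvPolynomial ℕ ℤ

noncomputable section

/-- Interchange the variables `x_{i+1}` and `x_{i+2}` (paper indexing). -/
def swapVar (i : ℕ) (f : Pol) : Pol := rename (Equiv.swap i (i+1)) f

/-- Exact division: the unique `g` with `d * g = f` when it exists (`0` otherwise). -/
def exactDiv (d f : Pol) : Pol := if h : ∃ g : Pol, d * g = f then h.choose else 0

/-- The divided difference operator `∂_{i+1}` (paper indexing). -/
def ddiff (i : ℕ) (f : Pol) : Pol := exactDiv (X i - X (i+1)) (f - swapVar i f)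

/-- The Bergeron–Sottile operator `R_{i+1}` (paper indexing): `x_j ↦ x_j` for
`j < i+1`, `x_{i+1} ↦ 0`, `x_j ↦ x_{j-1}` for `j > i+1`. -/
def BS (i : ℕ) : Pol →ₐ[ℤ] Pol :=
  aeval fun j => if j < i then X j else if j = i then 0 else X (j-1)

/-- `m`-fold iterate of `BS i`. -/
def BSit (i m : ℕ) (f : Pol) : Pol := (fun g => BS i g)^[m] f

/-- `Z g = Σ_{k ≥ 0} R₁ᵏ g`. -/
def Zop (f : Pol) : Pol := ∑ᶠ k : ℕ, BSit 0 k f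

/-- `Z^{(m)} g = Σ_{k ≥ 0} R₁^{km} g`. -/
def Zm (m : ℕ) (f : Pol) : Pol := ∑ᶠ k : ℕ, BSit 0 (k * m) f

/-- The truncation operator keeping the first `n` variables: `Π_n` in paper indexing. -/
def truncOp (n : ℕ) : Pol →ₐ[ℤ] Pol := aeval fun j => if j < n then X j else 0

/-- The quasisymmetric divided difference `T_{i+1}` defined as the exact quotient
`((R_{i+2} - R_{i+1})f)/x_{i+1}` (paper indexing). -/
def TqDiv (i : ℕ) (f : Pol) : Pol := exactDiv (X i) (BS (i+1) f - BS i f)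

/-- The quasisymmetric divided difference `T_{i+1} = R_{i+1} ∘ ∂_{i+1}` (paper indexing). -/
def Tq (i : ℕ) (f : Pol) : Pol := BS i (ddiff i f)

/-- The `m`-quasisymmetric divided difference `T^{(m)}_{i+1}` (paper indexing). -/
def Tm (m i : ℕ) (f : Pol) : Pol := exactDiv (X i) (BSit (i+1) m f - BSit i m f)

/-- The slide extractor `D_{i+1} = Π_{i+1} ∘ ∂_{i+1}` (paper indexing). -/
def Dop (i : ℕ) (f : Pol) : Pol := truncOp (i+1) (ddiff i f)

/-- The `m`-slide extractor `D^{(m)}_{i+1} = Π_{i+1} ∘ T^{(m)}_{i+1}` (paper indexing). -/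
def Dm (m i : ℕ) (f : Pol) : Pol := truncOp (i+1) (Tm m i f)

/-- The slide creator `B_{i+1} f = Σ_{k=1}^{i+1} x_k · R_k^{i+1-k}(Π_{i+1} f)` (paper indexing). -/
def Bop (i : ℕ) (f : Pol) : Pol :=
  ∑ k ∈ Finset.range (i+1), X k * BSit k (i - k) (truncOp (i+1) f)

/-- The creation operator `Z ∘ x_{i+1} ∘ R_{i+1}` (paper indexing). -/
def crea (i : ℕ) (f : Pol) : Pol := Zop (X i * BS i f)

/-- A permutation of `{0,1,2,…}` is finitely supported if it fixes all but
finitely many points. -/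
def FinSupp (w : Equiv.Perm ℕ) : Prop := Set.Finite {x | w x ≠ x}

/-- Coxeter length: the minimal `k` such that `w` is a product of `k` simple
transpositions. -/
def len (w : Equiv.Perm ℕ) : ℕ :=
  sInf {k | ∃ l : List ℕ, l.length = k ∧ (l.map fun i => Equiv.swap i (i+1)).prod = w}

/-- The set of reduced words for `w`. -/
def Red (w : Equiv.Perm ℕ) : Set (List ℕ) :=
  {l | l.length = len w ∧ (l.map fun i => Equiv.swap i (i+1)).prod = w}

/-- A family of polynomials indexed by permutations is a family of Schubert
polynomials if: each member is homogeneous of degree the length, the identity is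
sent to `1`, and divided differences act as expected (all this for finitely
supported permutations). -/
def IsSchubertFamily (S : Equiv.Perm ℕ → Pol) : Prop :=
  (∀ w, FinSupp w → (S w).IsHomogeneous (len w)) ∧
  S 1 = 1 ∧
  ∀ w, FinSupp w → ∀ i : ℕ,
    ddiff i (S w) = if w (i+1) < w i then S (w * Equiv.swap i (i+1)) else 0

/-- `b` is a compatible sequence for `a`. -/
def Compat {k : ℕ} (a b : Fin k → ℕ) : Prop :=
  Monotone b ∧ (∀ j, b j ≤ a j) ∧
  ∀ (j : ℕ) (h : j + 1 < k),
    a ⟨j, Nat.lt_of_succ_lt h⟩ < a ⟨j+1, h⟩ → b ⟨j, Nat.lt_of_succ_lt h⟩ < b ⟨j+1, h⟩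

/-- The slide polynomial `𝔉_a`, as the sum of the monomials of all compatible
sequences for `a`. -/
def slide {k : ℕ} (a : Fin k → ℕ) : Pol :=
  ∑ᶠ b ∈ {b : Fin k → ℕ | Compat a b}, ∏ j, X (b j)

/-- `b` is an `m`-compatible sequence for `a` (entrywise congruent mod `m`). -/
def MCompat (m : ℕ) {k : ℕ} (a b : Fin k → ℕ) : Prop :=
  Monotone b ∧ (∀ j, b j ≤ a j ∧ b j % m = a j % m) ∧
  ∀ (j : ℕ) (h : j + 1 < k),
    a ⟨j, Nat.lt_of_succ_lt h⟩ < a ⟨j+1, h⟩ → b ⟨j, Nat.lt_of_succ_lt h⟩ < b ⟨j+1, h⟩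

/-- The `m`-slide polynomial `𝔉ᵐ_a`. -/
def mslide (m : ℕ) {k : ℕ} (a : Fin k → ℕ) : Pol :=
  ∑ᶠ b ∈ {b : Fin k → ℕ | MCompat m a b}, ∏ j, X (b j)

/-- Value of the `m`-slide creator `B^{(m)}_{a+1}` (paper indexing) on the monomial with
exponent vector `d`. -/
def BmMono (m a : ℕ) (d : ℕ →₀ ℕ) : Pol :=
  if ∃ t, a < t ∧ d t ≠ 0 then 0
  else monomial (d.erase a) 1 *
    ∑ r ∈ Finset.range (a+1),
      if r * m ≤ a ∧ ∀ t, t < a → d t ≠ 0 → t < a - r * m then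
        X (a - r * m) ^ (d a + 1) else 0

/-- The `m`-slide creator `B^{(m)}_{a+1}` (paper indexing), extended linearly from
its values on monomials. -/
def Bm (m a : ℕ) (f : Pol) : Pol := ∑ d ∈ f.support, C (f.coeff d) * BmMono m a d

end

noncomputable section
open Finset in

lemma exactDiv_eq {d f g : Pol} (hd : d ≠ 0) (h : d * g = f) : exactDiv d f = g := by
  have he : ∃ g : Pol, d * g = f := ⟨g, h⟩
  rw [exactDiv, dif_pos he]
  exact mul_left_cancel₀ hd (he.choose_spec.trans h.symm)

lemma X_sub_X_ne (i : ℕ) : (X i - X (i+1) : Pol) ≠ 0 := by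
  intro h
  have : (X i : Pol) = X (i+1) := by linear_combination h
  exact (by omega : i ≠ i + 1) (MvPolynomial.X_injective this)

lemma swapVar_dvd (i : ℕ) (f : Pol) : (X i - X (i+1)) ∣ (f - swapVar i f) := by
  induction f using MvPolynomial.induction_on with
  | C a => simp [swapVar, dvd_zero]
  | add f g hf hg =>
      have : (f + g) - swapVar i (f + g) = (f - swapVar i f) + (g - swapVar i g) := by
        simp [swapVar, map_add]; ring
      rw [this]; exact dvd_add hf hg
  | mul_X f j hf =>
      have hXj : (X i - X (i+1)) ∣ ((X j : Pol) - swapVar i (X j)) := by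
        rw [swapVar, rename_X]
        rcases eq_or_ne j i with rfl | h1
        · simp [Equiv.swap_apply_left]
        rcases eq_or_ne j (i+1) with rfl | h2
        · rw [Equiv.swap_apply_right]; exact ⟨-1, by ring⟩
        · rw [Equiv.swap_apply_of_ne_of_ne h1 h2]; simp
      have key : f * X j - swapVar i (f * X j)
          = (f - swapVar i f) * X j + swapVar i f * (X j - swapVar i (X j)) := by
        simp only [swapVar, map_mul]; ring
      rw [key]
      exact dvd_add (Dvd.dvd.mul_right hf _) (Dvd.dvd.mul_left hXj _)

lemma ddiff_spec (i : ℕ) (f : Pol) :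
    (X i - X (i+1)) * ddiff i f = f - swapVar i f := by
  obtain ⟨g, hg⟩ := swapVar_dvd i f
  rw [ddiff, exactDiv_eq (X_sub_X_ne i) hg.symm, hg]

lemma ddiff_unique {i : ℕ} {f g : Pol} (h : (X i - X (i+1)) * g = f - swapVar i f) :
    ddiff i f = g := by
  rw [ddiff]; exact exactDiv_eq (X_sub_X_ne i) h

lemma BS_X_lt {i j : ℕ} (h : j < i) : BS i (X j) = X j := by simp [BS, h]
lemma BS_X_self (i : ℕ) : BS i (X i) = 0 := by simp [BS]
lemma BS_X_gt {i j : ℕ} (h : i < j) : BS i (X j) = X (j - 1) := by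
  rw [BS, aeval_X, if_neg (by omega), if_neg (by omega)]

/-- The key commutation: `R_{i+2} = R_{i+1} ∘ s_{i+1}` (paper indexing). -/
lemma BS_swapVar (i : ℕ) (f : Pol) : BS i (swapVar i f) = BS (i+1) f := by
  rw [swapVar, BS, BS, aeval_rename]
  have hfun : ((fun j => if j < i then (X j : Pol) else if j = i then 0 else X (j - 1)) ∘ ⇑(Equiv.swap i (i+1)))
      = (fun j => if j < i + 1 then (X j : Pol) else if j = i + 1 then 0 else X (j - 1)) := by
    funext j
    simp only [Function.comp_apply]
    rcases lt_trichotomy j i with h | rfl | h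
    · rw [Equiv.swap_apply_of_ne_of_ne (by omega) (by omega), if_pos h, if_pos (by omega)]
    · rw [Equiv.swap_apply_left, if_neg (by omega), if_neg (by omega), if_pos (by omega)]
      norm_num
    · rcases eq_or_ne j (i+1) with rfl | h2
      · rw [Equiv.swap_apply_right, if_neg (by omega), if_pos rfl, if_neg (by omega), if_pos rfl]
      · rw [Equiv.swap_apply_of_ne_of_ne (by omega) h2, if_neg (by omega), if_neg (by omega),
          if_neg (by omega), if_neg h2]
  rw [hfun]

/-- The fundamental local identity (L). -/
lemma BS_succ_sub (i : ℕ) (f : Pol) :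
    BS (i+1) f - BS i f = X i * BS i (ddiff i f) := by
  have h := congrArg (BS i) (ddiff_spec i f)
  simp only [map_mul, map_sub, BS_X_self] at h
  rw [BS_X_gt (by omega : i < i + 1)] at h
  simp only [Nat.add_sub_cancel, BS_swapVar] at h
  linear_combination h

end
noncomputable section

lemma exists_supported (f : Pol) : ∃ N, f ∈ MvPolynomial.supported ℤ {n | n < N} := by
  refine ⟨f.vars.sup id + 1, mem_supported.2 fun n hn => ?_⟩
  have := Finset.le_sup (f := id) hn
  simpa using Nat.lt_succ_of_le this

lemma supp_mono {N M : ℕ} (h : N ≤ M) :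
    MvPolynomial.supported ℤ {n | n < N} ≤ MvPolynomial.supported ℤ {n | n < M} :=
  MvPolynomial.supported_mono (fun n hn => lt_of_lt_of_le hn h)

lemma BS_fixed {N : ℕ} {f : Pol} (hf : f ∈ MvPolynomial.supported ℤ {n | n < N})
    {r : ℕ} (hr : N ≤ r) : BS r f = f := by
  rw [supported_eq_adjoin_X] at hf
  induction hf using Algebra.adjoin_induction with
  | mem x hx =>
      obtain ⟨n, hn, rfl⟩ := hx
      exact BS_X_lt (lt_of_lt_of_le hn hr)
  | algebraMap r => simp [BS]
  | add x y _ _ hx hy => rw [map_add, hx, hy]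
  | mul x y _ _ hx hy => rw [map_mul, hx, hy]

lemma BS0_supported {N : ℕ} {f : Pol} (hf : f ∈ MvPolynomial.supported ℤ {n | n < N + 1}) :
    BS 0 f ∈ MvPolynomial.supported ℤ {n | n < N} := by
  rw [supported_eq_adjoin_X] at hf
  induction hf using Algebra.adjoin_induction with
  | mem x hx =>
      obtain ⟨n, hn, rfl⟩ := hx
      rcases Nat.eq_zero_or_pos n with rfl | hp
      · rw [BS_X_self]; exact Subalgebra.zero_mem _
      · rw [BS_X_gt hp]
        refine MvPolynomial.X_mem_supported.2 ?_
        simp only [Set.mem_setOf_eq] at hn ⊢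
        omega
  | algebraMap r =>
      rw [AlgHom.commutes]
      exact Subalgebra.algebraMap_mem _ _
  | add x y _ _ hx hy => rw [map_add]; exact Subalgebra.add_mem _ hx hy
  | mul x y _ _ hx hy => rw [map_mul]; exact Subalgebra.mul_mem _ hx hy

lemma constantCoeff_BS0 (f : Pol) : constantCoeff (BS 0 f) = constantCoeff f := by
  induction f using MvPolynomial.induction_on with
  | C a => simp [BS]
  | add f g hf hg => simp only [map_add, hf, hg]
  | mul_X f j hf =>
      rw [map_mul, map_mul, map_mul]
      rcases Nat.eq_zero_or_pos j with rfl | hp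
      · simp [BS_X_self]
      · simp [BS_X_gt hp]

lemma eq_C_of_supported_zero {f : Pol} (hf : f ∈ MvPolynomial.supported ℤ (∅ : Set ℕ)) :
    f = C (constantCoeff f) := by
  have hv : (f.vars : Set ℕ) ⊆ ∅ := mem_supported.1 hf
  apply MvPolynomial.ext
  intro d
  rcases eq_or_ne d 0 with rfl | hd
  · rw [constantCoeff_eq, coeff_C, if_pos rfl]
  · rw [coeff_C, if_neg (Ne.symm hd)]
    by_contra hc
    obtain ⟨n, hn⟩ := Finsupp.support_nonempty_iff.2 hd
    exact hv (by exact_mod_cast (mem_vars n).2 ⟨d, mem_support_iff.2 hc, hn⟩)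

lemma BSit0_const {N : ℕ} {f : Pol} (hf : f ∈ MvPolynomial.supported ℤ {n | n < N}) :
    BSit 0 N f = C (constantCoeff f) := by
  induction N generalizing f with
  | zero =>
      have : ({n | n < 0} : Set ℕ) = ∅ := by ext n; simp
      rw [this] at hf
      rw [BSit, Function.iterate_zero_apply]
      exact eq_C_of_supported_zero hf
  | succ N ih =>
      rw [BSit, Function.iterate_succ_apply]
      have := ih (BS0_supported hf)
      rw [BSit] at this
      rw [this, constantCoeff_BS0]

lemma BSit_apply_zero (i k : ℕ) : BSit i k 0 = 0 := by
  induction k with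
  | zero => rfl
  | succ k ih => rw [BSit, Function.iterate_succ_apply'] at *; rw [ih]; exact map_zero _

lemma BSit0_eventually_zero {N : ℕ} {f : Pol}
    (hf : f ∈ MvPolynomial.supported ℤ {n | n < N}) (hc : constantCoeff f = 0) :
    ∀ k, N ≤ k → BSit 0 k f = 0 := by
  intro k hk
  induction k with
  | zero =>
      have h0 : N = 0 := Nat.le_zero.1 hk
      subst h0
      rw [BSit0_const hf, hc, map_zero]
  | succ k ih =>
      rcases Nat.lt_or_ge N (k+1) with h | h
      · have := ih (by omega)
        rw [BSit, Function.iterate_succ_apply']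
        rw [BSit] at this
        rw [this, map_zero]
      · have : N = k + 1 := by omega
        subst this
        rw [BSit0_const hf, hc, map_zero]

lemma BSit_sub (i k : ℕ) (f g : Pol) : BSit i k (f - g) = BSit i k f - BSit i k g := by
  induction k generalizing f g with
  | zero => rfl
  | succ k ih =>
      simp only [BSit, Function.iterate_succ_apply] at *
      rw [map_sub, ih]

lemma BSit_add (i k : ℕ) (f g : Pol) : BSit i k (f + g) = BSit i k f + BSit i k g := by
  induction k generalizing f g with
  | zero => rfl
  | succ k ih =>
      simp only [BSit, Function.iterate_succ_apply] at *
      rw [map_add, ih]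

lemma Zop_eq_sum {N : ℕ} {f : Pol} (hf : f ∈ MvPolynomial.supported ℤ {n | n < N})
    (hc : constantCoeff f = 0) :
    Zop f = ∑ k ∈ Finset.range N, BSit 0 k f := by
  rw [Zop]
  apply finsum_eq_finset_sum_of_support_subset
  intro k hk
  simp only [Function.mem_support] at hk
  simp only [Finset.coe_range, Set.mem_Iio]
  by_contra h
  exact hk (BSit0_eventually_zero hf hc k (by omega))

lemma Zop_zero : Zop 0 = 0 := by
  rw [Zop]
  have : ∀ k : ℕ, BSit 0 k (0 : Pol) = 0 := fun k => BSit_apply_zero 0 k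
  simp only [this, finsum_zero]

/-- Telescoping: `Z (f - R₁ f) = f` for `f` with zero constant term. -/
lemma Zop_telescope {f : Pol} (hc : constantCoeff f = 0) : Zop (f - BS 0 f) = f := by
  obtain ⟨N, hN⟩ := exists_supported f
  have hBS : BS 0 f ∈ MvPolynomial.supported ℤ {n | n < N} := by
    have := BS0_supported (supp_mono (Nat.le_succ N) hN)
    exact this
  have hsub : f - BS 0 f ∈ MvPolynomial.supported ℤ {n | n < N} := Subalgebra.sub_mem _ hN hBS
  have hcc : constantCoeff (f - BS 0 f) = 0 := by
    rw [map_sub, constantCoeff_BS0, hc]; ring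
  rw [Zop_eq_sum hsub hcc]
  have hterm : ∀ k, BSit 0 k (f - BS 0 f) = BSit 0 k f - BSit 0 (k+1) f := by
    intro k
    rw [BSit_sub]
    rfl
  simp only [hterm]
  rw [Finset.sum_range_sub' (fun k => BSit 0 k f) N]
  rw [BSit0_eventually_zero hN hc N le_rfl]
  simp [BSit]

lemma Zop_add {f g : Pol} (hf : constantCoeff f = 0) (hg : constantCoeff g = 0) :
    Zop (f + g) = Zop f + Zop g := by
  obtain ⟨N, hN⟩ := exists_supported f
  obtain ⟨M, hM⟩ := exists_supported g
  have hN' : f ∈ MvPolynomial.supported ℤ {n | n < max N M} := supp_mono (le_max_left _ _) hN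
  have hM' : g ∈ MvPolynomial.supported ℤ {n | n < max N M} := supp_mono (le_max_right _ _) hM
  have hsum : f + g ∈ MvPolynomial.supported ℤ {n | n < max N M} := Subalgebra.add_mem _ hN' hM'
  rw [Zop_eq_sum hN' hf, Zop_eq_sum hM' hg, Zop_eq_sum hsum (by rw [map_add, hf, hg]; ring)]
  rw [← Finset.sum_add_distrib]
  exact Finset.sum_congr rfl fun k _ => BSit_add 0 k f g

lemma constantCoeff_crea_arg (j : ℕ) (f : Pol) : constantCoeff (X j * f) = 0 := by
  rw [map_mul, constantCoeff_X, zero_mul]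

lemma crea_addhom (j : ℕ) (f g : Pol) : crea j (f + g) = crea j f + crea j g := by
  rw [crea, crea, crea, map_add, mul_add, Zop_add (constantCoeff_crea_arg _ _) (constantCoeff_crea_arg _ _)]

lemma crea_zero (j : ℕ) : crea j 0 = 0 := by
  rw [crea, map_zero, mul_zero, Zop_zero]

lemma crea_sum {ι : Type*} (s : Finset ι) (g : ι → Pol) (j : ℕ) :
    crea j (∑ i ∈ s, g i) = ∑ i ∈ s, crea j (g i) := by
  classical
  induction s using Finset.induction_on with
  | empty => simp [crea_zero]
  | insert _ _ h ih => rw [Finset.sum_insert h, Finset.sum_insert h, crea_addhom, ih]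

end
noncomputable section

abbrev swapL : ℕ → Equiv.Perm ℕ := fun i => Equiv.swap i (i+1)

lemma FinSupp.bound {w : Equiv.Perm ℕ} (hw : FinSupp w) : ∃ N, ∀ x, N ≤ x → w x = x := by
  obtain ⟨b, hb⟩ := hw.bddAbove
  refine ⟨b + 1, fun x hx => ?_⟩
  by_contra h
  have : x ≤ b := hb h
  omega

lemma perm_lt_of_bound {w : Equiv.Perm ℕ} {N : ℕ} (hN : ∀ x, N ≤ x → w x = x)
    {a : ℕ} (ha : a < N) : w a < N := by
  by_contra h
  push_neg at h
  have := hN _ h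
  have := w.injective this
  omega

lemma perm_eq_one_of_no_descent {w : Equiv.Perm ℕ} (h : ∀ j, ¬ w (j+1) < w j) : w = 1 := by
  have hmono : StrictMono w := by
    apply strictMono_nat_of_lt_succ
    intro n
    rcases lt_trichotomy (w n) (w (n+1)) with h1 | h1 | h1
    · exact h1
    · exact absurd (w.injective h1) (by omega)
    · exact absurd h1 (h n)
  ext x
  induction x using Nat.strong_induction_on with
  | _ x ih =>
      have hy : w (w.symm x) = x := w.apply_symm_apply x
      rcases lt_trichotomy (w.symm x) x with h1 | h1 | h1
      · have := ih _ h1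
        simp only [Equiv.Perm.coe_one, id_eq] at this ⊢
        omega
      · simp only [Equiv.Perm.coe_one, id_eq]
        rw [h1] at hy
        exact hy
      · have := hmono.le_apply (x := w.symm x)
        omega

lemma exists_descent {w : Equiv.Perm ℕ} (hne : w ≠ 1) : ∃ j, w (j+1) < w j := by
  by_contra h
  push_neg at h
  exact hne (perm_eq_one_of_no_descent (by simpa using h))

lemma finSupp_one : FinSupp (1 : Equiv.Perm ℕ) := by
  simp [FinSupp]

lemma finSupp_mul_swap {w : Equiv.Perm ℕ} (hw : FinSupp w) (j : ℕ) :
    FinSupp (w * swapL j) := by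
  apply Set.Finite.subset (hw.union (Set.finite_Icc j (j+1)))
  intro x hx
  simp only [Set.mem_setOf_eq, Equiv.Perm.mul_apply] at hx
  by_cases h1 : x = j
  · exact Or.inr (by simp [h1, Set.mem_Icc])
  by_cases h2 : x = j + 1
  · exact Or.inr (by simp [h2, Set.mem_Icc])
  · left
    have hs : (swapL j) x = x := Equiv.swap_apply_of_ne_of_ne h1 h2
    rw [hs] at hx
    exact hx

def descSet (w : Equiv.Perm ℕ) : Set ℕ := {j | w (j+1) < w j}

lemma descSet_finite {w : Equiv.Perm ℕ} (hw : FinSupp w) : (descSet w).Finite := by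
  obtain ⟨N, hN⟩ := hw.bound
  apply Set.Finite.subset (Set.finite_Iio N)
  intro j hj
  simp only [descSet, Set.mem_setOf_eq] at hj
  simp only [Set.mem_Iio]
  by_contra h
  rw [hN j (by omega), hN (j+1) (by omega)] at hj
  omega

lemma chain_prod_apply (p k : ℕ) :
    ((List.range' p k).map swapL).prod (p + k) = p := by
  induction k generalizing p with
  | zero => simp
  | succ k ih =>
      rw [List.range'_succ, List.map_cons, List.prod_cons, Equiv.Perm.mul_apply]
      have : (p + (k+1)) = (p+1) + k := by omega
      rw [this, ih (p+1)]
      simp [Equiv.swap_apply_right]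

lemma chain_prod_fix {p k x : ℕ} (hx : x < p ∨ p + k < x) :
    ((List.range' p k).map swapL).prod x = x := by
  induction k generalizing p with
  | zero => simp
  | succ k ih =>
      rw [List.range'_succ, List.map_cons, List.prod_cons, Equiv.Perm.mul_apply]
      rw [ih (p := p+1) (by omega)]
      exact Equiv.swap_apply_of_ne_of_ne (by omega) (by omega)

lemma swap_list_prod_inv (l : List ℕ) :
    ((l.map swapL).prod)⁻¹ = ((l.reverse).map swapL).prod := by
  rw [List.prod_inv_reverse]
  congr 1
  simp [List.map_reverse, List.map_map, Function.comp_def, swapL, Equiv.swap_inv]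

lemma exists_word_aux : ∀ N (w : Equiv.Perm ℕ), (∀ x, N ≤ x → w x = x) →
    ∃ l : List ℕ, (l.map swapL).prod = w := by
  intro N
  induction N with
  | zero =>
      intro w hw
      refine ⟨[], ?_⟩
      simp only [List.map_nil, List.prod_nil]
      exact (Equiv.ext fun x => (hw x (Nat.zero_le x)).symm)
  | succ N ih =>
      intro w hw
      set p := w.symm N with hp
      have hwp : w p = N := w.apply_symm_apply N
      have hpN : p ≤ N := by
        by_contra h
        push_neg at h
        have := hw p (by omega)
        omega
      rcases eq_or_lt_of_le hpN with heq | hlt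
      · -- w N = N, so w fixes everything ≥ N
        have hfix : ∀ x, N ≤ x → w x = x := by
          intro x hx
          rcases eq_or_lt_of_le hx with rfl | h
          · rw [← heq] at hwp ⊢; exact hwp
          · exact hw x (by omega)
        exact ih w hfix
      · set σ := ((List.range' p (N - p)).map swapL).prod with hσ
        have hσN : σ N = p := by
          have h2 : p + (N - p) = N := by omega
          have h3 := chain_prod_apply p (N - p)
          rw [h2] at h3
          exact h3
        have hσfix : ∀ x, N + 1 ≤ x → σ x = x := by
          intro x hx
          exact chain_prod_fix (Or.inr (by omega))
        have hv : ∀ x, N ≤ x → (w * σ) x = x := by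
          intro x hx
          rcases eq_or_lt_of_le hx with rfl | h
          · rw [Equiv.Perm.mul_apply, hσN, hwp]
          · rw [Equiv.Perm.mul_apply, hσfix x (by omega), hw x (by omega)]
        obtain ⟨l, hl⟩ := ih (w * σ) hv
        refine ⟨l ++ (List.range' p (N - p)).reverse, ?_⟩
        rw [List.map_append, List.prod_append, hl, ← swap_list_prod_inv]
        exact mul_inv_cancel_right w σ

lemma exists_word {w : Equiv.Perm ℕ} (hw : FinSupp w) :
    ∃ l : List ℕ, (l.map swapL).prod = w := by
  obtain ⟨N, hN⟩ := hw.bound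
  exact exists_word_aux N w hN

end
noncomputable section

def invSet (w : Equiv.Perm ℕ) : Set (ℕ × ℕ) := {p | p.1 < p.2 ∧ w p.2 < w p.1}

lemma invSet_finite {w : Equiv.Perm ℕ} (hw : FinSupp w) : (invSet w).Finite := by
  obtain ⟨N, hN⟩ := hw.bound
  apply Set.Finite.subset ((Set.finite_Iio N).prod (Set.finite_Iio N))
  rintro ⟨a, b⟩ ⟨hab, hw'⟩
  dsimp only at hab hw'
  simp only [Set.mem_prod, Set.mem_Iio]
  have hbN : b < N := by
    by_contra h
    push_neg at h
    rw [hN b h] at hw'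
    rcases Nat.lt_or_ge a N with h2 | h2
    · exact absurd (perm_lt_of_bound hN h2) (by omega)
    · rw [hN a h2] at hw'; omega
  exact ⟨by omega, hbN⟩

def invN (w : Equiv.Perm ℕ) : ℕ := (invSet w).ncard

lemma swap_mono {j a b : ℕ} (hab : a < b) (hne : ¬(a = j ∧ b = j + 1)) :
    swapL j a < swapL j b := by
  simp only [swapL]
  rcases eq_or_ne a j with rfl | ha1
  · rw [Equiv.swap_apply_left]
    have hb : b ≠ a + 1 := fun h => hne ⟨rfl, h⟩
    rw [Equiv.swap_apply_of_ne_of_ne (by omega) hb]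
    omega
  rcases eq_or_ne a (j+1) with rfl | ha2
  · rw [Equiv.swap_apply_right, Equiv.swap_apply_of_ne_of_ne (by omega) (by omega)]
    omega
  · rw [Equiv.swap_apply_of_ne_of_ne ha1 ha2]
    rcases eq_or_ne b j with rfl | hb1
    · rw [Equiv.swap_apply_left]; omega
    rcases eq_or_ne b (j+1) with rfl | hb2
    · rw [Equiv.swap_apply_right]; omega
    · rw [Equiv.swap_apply_of_ne_of_ne hb1 hb2]; exact hab

lemma phi_image_subset (w : Equiv.Perm ℕ) (j : ℕ) :
    (fun p : ℕ × ℕ => (swapL j p.1, swapL j p.2)) '' (invSet w \ {(j, j+1)}) ⊆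
      invSet (w * swapL j) \ {(j, j+1)} := by
  rintro _ ⟨⟨a, b⟩, ⟨⟨hab, hinv⟩, hne⟩, rfl⟩
  have hne' : ¬(a = j ∧ b = j + 1) := by
    intro ⟨h1, h2⟩; exact hne (by simp [h1, h2])
  constructor
  · refine ⟨swap_mono hab hne', ?_⟩
    simp only [Equiv.Perm.mul_apply, swapL, Equiv.swap_apply_self]
    exact hinv
  · intro hmem
    simp only [Set.mem_singleton_iff, Prod.mk.injEq] at hmem
    obtain ⟨h1, h2⟩ := hmem
    have ha : a = j + 1 := by
      have := congrArg (swapL j) h1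
      simp only [swapL, Equiv.swap_apply_self, Equiv.swap_apply_left] at this
      exact this
    have hb : b = j := by
      have := congrArg (swapL j) h2
      simp only [swapL, Equiv.swap_apply_self, Equiv.swap_apply_right] at this
      exact this
    omega

lemma phi_image_eq (w : Equiv.Perm ℕ) (j : ℕ) :
    (fun p : ℕ × ℕ => (swapL j p.1, swapL j p.2)) '' (invSet w \ {(j, j+1)}) =
      invSet (w * swapL j) \ {(j, j+1)} := by
  have hinvol : ∀ p : ℕ × ℕ, (fun p : ℕ × ℕ => (swapL j p.1, swapL j p.2))
      ((fun p : ℕ × ℕ => (swapL j p.1, swapL j p.2)) p) = p := by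
    rintro ⟨a, b⟩
    simp [swapL, Equiv.swap_apply_self]
  apply Set.Subset.antisymm (phi_image_subset w j)
  intro p hp
  have hw2 : w * swapL j * swapL j = w := by
    rw [mul_assoc, swapL, Equiv.swap_mul_self, mul_one]
  have h2 := phi_image_subset (w * swapL j) j (Set.mem_image_of_mem _ hp)
  rw [hw2] at h2
  exact ⟨_, h2, hinvol p⟩

lemma invN_mul_swap_desc {w : Equiv.Perm ℕ} (hw : FinSupp w) {j : ℕ}
    (hdesc : w (j+1) < w j) : invN (w * swapL j) + 1 = invN w := by
  have hfin := invSet_finite hw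
  have hfin' := invSet_finite (finSupp_mul_swap hw j)
  have hmem : (j, j+1) ∈ invSet w := ⟨by omega, hdesc⟩
  have hnmem : (j, j+1) ∉ invSet (w * swapL j) := by
    rintro ⟨-, h⟩
    simp only [Equiv.Perm.mul_apply, swapL, Equiv.swap_apply_left, Equiv.swap_apply_right] at h
    omega
  have hinj : Function.Injective (fun p : ℕ × ℕ => (swapL j p.1, swapL j p.2)) := by
    rintro ⟨a, b⟩ ⟨c, d⟩ h
    simp only [Prod.mk.injEq] at h
    exact Prod.ext ((swapL j).injective h.1) ((swapL j).injective h.2)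
  have hcard : (invSet w \ {(j, j+1)}).ncard = (invSet (w * swapL j) \ {(j, j+1)}).ncard := by
    rw [← phi_image_eq, Set.ncard_image_of_injective _ hinj]
  rw [invN, invN, ← Set.ncard_diff_singleton_add_one hmem hfin, hcard,
    Set.diff_singleton_eq_self hnmem]

lemma invN_mul_swap_not_desc {w : Equiv.Perm ℕ} (hw : FinSupp w) {j : ℕ}
    (hdesc : ¬ w (j+1) < w j) : invN (w * swapL j) = invN w + 1 := by
  have hfin := invSet_finite hw
  have hfin' := invSet_finite (finSupp_mul_swap hw j)
  have hlt : w j < w (j+1) := by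
    rcases lt_trichotomy (w j) (w (j+1)) with h | h | h
    · exact h
    · exact absurd (w.injective h) (by omega)
    · exact absurd h hdesc
  have hnmem : (j, j+1) ∉ invSet w := fun h => hdesc h.2
  have hmem : (j, j+1) ∈ invSet (w * swapL j) := by
    refine ⟨by omega, ?_⟩
    simp only [Equiv.Perm.mul_apply, swapL, Equiv.swap_apply_left, Equiv.swap_apply_right]
    exact hlt
  have hinj : Function.Injective (fun p : ℕ × ℕ => (swapL j p.1, swapL j p.2)) := by
    rintro ⟨a, b⟩ ⟨c, d⟩ h
    simp only [Prod.mk.injEq] at h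
    exact Prod.ext ((swapL j).injective h.1) ((swapL j).injective h.2)
  have hcard : (invSet w \ {(j, j+1)}).ncard = (invSet (w * swapL j) \ {(j, j+1)}).ncard := by
    rw [← phi_image_eq, Set.ncard_image_of_injective _ hinj]
  rw [Set.diff_singleton_eq_self hnmem] at hcard
  rw [invN, invN, hcard, Set.ncard_diff_singleton_add_one hmem hfin']

lemma invN_one : invN 1 = 0 := by
  have : invSet 1 = ∅ := by
    ext ⟨a, b⟩
    simp only [invSet, Set.mem_setOf_eq, Equiv.Perm.coe_one, id_eq, Set.mem_empty_iff_false,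
      iff_false]
    omega
  rw [invN, this, Set.ncard_empty]

lemma eq_one_of_invN_eq_zero {w : Equiv.Perm ℕ} (hw : FinSupp w) (h : invN w = 0) : w = 1 := by
  have hfin := invSet_finite hw
  have hempty : invSet w = ∅ := (Set.ncard_eq_zero hfin).1 h
  apply perm_eq_one_of_no_descent
  intro j hj
  have : (j, j+1) ∈ invSet w := ⟨by omega, hj⟩
  rw [hempty] at this
  exact this

lemma finSupp_word_prod (l : List ℕ) : FinSupp ((l.map swapL).prod) := by
  induction l using List.reverseRecOn with
  | nil => exact finSupp_one
  | append_singleton l j ih =>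
      rw [List.map_append, List.prod_append, List.map_singleton, List.prod_singleton]
      exact finSupp_mul_swap ih j

lemma invN_le_wordlen : ∀ (l : List ℕ), invN ((l.map swapL).prod) ≤ l.length := by
  intro l
  induction l using List.reverseRecOn with
  | nil => simp [invN_one]
  | append_singleton l j ih =>
      rw [List.map_append, List.prod_append, List.map_singleton, List.prod_singleton]
      set v := (l.map swapL).prod with hv
      have hfv : FinSupp v := finSupp_word_prod l
      rw [List.length_append, List.length_singleton]
      by_cases hd : v (j+1) < v j
      · have := invN_mul_swap_desc hfv hd
        omega
      · have := invN_mul_swap_not_desc hfv hd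
        omega

lemma word_of_invN : ∀ n (w : Equiv.Perm ℕ), FinSupp w → invN w = n →
    ∃ l : List ℕ, l.length = n ∧ (l.map swapL).prod = w := by
  intro n
  induction n with
  | zero =>
      intro w hw h
      exact ⟨[], rfl, by simp [eq_one_of_invN_eq_zero hw h]⟩
  | succ n ih =>
      intro w hw h
      have hne : w ≠ 1 := by
        rintro rfl
        rw [invN_one] at h
        omega
      obtain ⟨j, hj⟩ := exists_descent hne
      have hv : FinSupp (w * swapL j) := finSupp_mul_swap hw j
      have hinv : invN (w * swapL j) = n := by
        have := invN_mul_swap_desc hw hj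
        omega
      obtain ⟨l, hl, hprod⟩ := ih (w * swapL j) hv hinv
      refine ⟨l ++ [j], by simp [hl], ?_⟩
      rw [List.map_append, List.prod_append, List.map_singleton, List.prod_singleton, hprod,
        mul_assoc, swapL, Equiv.swap_mul_self, mul_one]

lemma len_eq_invN {w : Equiv.Perm ℕ} (hw : FinSupp w) : len w = invN w := by
  obtain ⟨l, hl, hprod⟩ := word_of_invN (invN w) w hw rfl
  apply le_antisymm
  · exact Nat.sInf_le ⟨l, hl, hprod⟩
  · have hne : {k | ∃ l : List ℕ, l.length = k ∧ (l.map fun i => Equiv.swap i (i+1)).prod = w}.Nonempty :=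
      ⟨l.length, l, rfl, hprod⟩
    obtain ⟨l', hl', hprod'⟩ := Nat.sInf_mem hne
    rw [len, ← hl']
    calc invN w = invN ((l'.map swapL).prod) := by rw [hprod']
    _ ≤ l'.length := invN_le_wordlen l'

lemma len_one : len 1 = 0 := by rw [len_eq_invN finSupp_one, invN_one]

lemma len_pos {w : Equiv.Perm ℕ} (hw : FinSupp w) (hne : w ≠ 1) : 0 < len w := by
  rw [len_eq_invN hw]
  rcases Nat.eq_zero_or_pos (invN w) with h | h
  · exact absurd (eq_one_of_invN_eq_zero hw h) hne
  · exact h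

lemma len_mul_swap_desc {w : Equiv.Perm ℕ} (hw : FinSupp w) {j : ℕ}
    (hdesc : w (j+1) < w j) : len (w * swapL j) + 1 = len w := by
  rw [len_eq_invN hw, len_eq_invN (finSupp_mul_swap hw j)]
  exact invN_mul_swap_desc hw hdesc

lemma len_mul_swap_not_desc {w : Equiv.Perm ℕ} (hw : FinSupp w) {j : ℕ}
    (hdesc : ¬ w (j+1) < w j) : len (w * swapL j) = len w + 1 := by
  rw [len_eq_invN hw, len_eq_invN (finSupp_mul_swap hw j)]
  exact invN_mul_swap_not_desc hw hdesc

end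
noncomputable section

lemma Red_one : Red (1 : Equiv.Perm ℕ) = {([] : List ℕ)} := by
  ext l
  constructor
  · rintro ⟨hlen, -⟩
    rw [len_one] at hlen
    simp [List.length_eq_zero_iff.1 hlen]
  · rintro rfl
    exact ⟨by simp [len_one], by simp⟩

lemma Red_decomp {w : Equiv.Perm ℕ} (hw : FinSupp w) (hne : w ≠ 1) :
    Red w = ⋃ j ∈ descSet w, (fun l => l ++ [j]) '' Red (w * swapL j) := by
  ext l
  simp only [Set.mem_iUnion, Set.mem_image, exists_prop]
  constructor
  · rintro ⟨hlen, hprod⟩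
    have hlpos : l ≠ [] := by
      intro h
      rw [h] at hlen
      have := len_pos hw hne
      simp at hlen
      omega
    obtain ⟨l', j, rfl⟩ := (List.eq_nil_or_concat l).resolve_left hlpos
    rw [List.concat_eq_append] at *
    have hprod' : (l'.map swapL).prod = w * swapL j := by
      rw [List.map_append, List.prod_append, List.map_singleton, List.prod_singleton] at hprod
      rw [← hprod, mul_assoc, swapL, Equiv.swap_mul_self, mul_one]
    have hlen' : l'.length + 1 = len w := by
      rw [List.length_append, List.length_singleton] at hlen
      omega
    have hlev : len (w * swapL j) ≤ l'.length := Nat.sInf_le ⟨l', rfl, hprod'⟩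
    have hdesc : j ∈ descSet w := by
      by_contra hnd
      have := len_mul_swap_not_desc hw hnd
      omega
    have hlend : len (w * swapL j) + 1 = len w := len_mul_swap_desc hw hdesc
    exact ⟨j, hdesc, l', ⟨by omega, hprod'⟩, rfl⟩
  · rintro ⟨j, hdesc, l', ⟨hlen', hprod'⟩, rfl⟩
    have hlend : len (w * swapL j) + 1 = len w := len_mul_swap_desc hw hdesc
    refine ⟨by simp [hlen']; omega, ?_⟩
    rw [List.map_append, List.prod_append, List.map_singleton, List.prod_singleton, hprod',
      mul_assoc, swapL, Equiv.swap_mul_self, mul_one]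

lemma Red_finite : ∀ n (w : Equiv.Perm ℕ), FinSupp w → len w = n → (Red w).Finite := by
  intro n
  induction n using Nat.strong_induction_on with
  | _ n ih =>
      intro w hw hlen
      rcases eq_or_ne w 1 with rfl | hne
      · rw [Red_one]; exact Set.finite_singleton _
      · rw [Red_decomp hw hne]
        apply Set.Finite.biUnion (descSet_finite hw)
        intro j hj
        apply Set.Finite.image
        have hlend : len (w * swapL j) + 1 = len w := len_mul_swap_desc hw hj
        exact ih (len (w * swapL j)) (by omega) _ (finSupp_mul_swap hw j) rfl

lemma Fsum_decomp {w : Equiv.Perm ℕ} (hw : FinSupp w) (hne : w ≠ 1) (G : List ℕ → Pol) :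
    ∑ᶠ l ∈ Red w, G l = ∑ᶠ j ∈ descSet w, ∑ᶠ l ∈ Red (w * swapL j), G (l ++ [j]) := by
  rw [Red_decomp hw hne]
  rw [finsum_mem_biUnion]
  · apply finsum_mem_congr rfl
    intro j hj
    exact finsum_mem_image (fun l₁ _ l₂ _ h => by simpa using h)
  · -- pairwise disjoint
    intro j hj k hk hjk
    simp only [Function.onFun]
    rw [Set.disjoint_left]
    rintro l ⟨l₁, -, rfl⟩ ⟨l₂, -, h⟩
    apply hjk
    have := congrArg List.getLast? h
    simp only [List.getLast?_concat] at this
    exact (Option.some_injective _ this).symm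
  · exact descSet_finite hw
  · intro j hj
    exact Set.Finite.image _ (Red_finite _ _ (finSupp_mul_swap hw j) rfl)

lemma Zop_finset_sum {ι : Type*} (s : Finset ι) (g : ι → Pol)
    (hg : ∀ i ∈ s, constantCoeff (g i) = 0) :
    Zop (∑ i ∈ s, g i) = ∑ i ∈ s, Zop (g i) := by
  classical
  induction s using Finset.induction_on with
  | empty => simp [Zop_zero]
  | @insert a s ha ih =>
      rw [Finset.sum_insert ha, Finset.sum_insert ha,
        Zop_add (hg a (Finset.mem_insert_self a s)) ?_, ih (fun i hi => hg i (Finset.mem_insert_of_mem hi))]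
      rw [map_sum]
      exact Finset.sum_eq_zero fun i hi => hg i (Finset.mem_insert_of_mem hi)

end
noncomputable section

lemma star {S : Equiv.Perm ℕ → Pol} (hS : IsSchubertFamily S) {w : Equiv.Perm ℕ}
    (hw : FinSupp w) (hne : w ≠ 1) :
    S w = ∑ᶠ j ∈ descSet w, crea j (S (w * Equiv.swap j (j+1))) := by
  obtain ⟨hhom, hone, hdd⟩ := hS
  obtain ⟨N, hN⟩ := hw.bound
  obtain ⟨M₀, hM₀⟩ := exists_supported (S w)
  set M := max M₀ N with hM
  set DF := (descSet_finite hw).toFinset with hDF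
  set t : ℕ → Pol := fun j => X j * BS j (S (w * Equiv.swap j (j+1))) with ht
  have hdesc_lt : ∀ j, j ∈ descSet w → j < N := by
    intro j hj
    by_contra h
    push_neg at h
    have h1 := hN j h
    have h2 := hN (j+1) (by omega)
    have := hj
    simp only [descSet, Set.mem_setOf_eq] at this
    omega
  have key : ∀ d r, M ≤ r + d →
      S w = BS r (S w) + ∑ j ∈ DF, (if r ≤ j then t j else 0) := by
    intro d
    induction d with
    | zero =>
        intro r hr
        have hr' : M ≤ r := by omega
        have h1 : BS r (S w) = S w :=
          BS_fixed (supp_mono (le_trans (le_max_left _ _) hr') hM₀) le_rfl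
        have h2 : ∑ j ∈ DF, (if r ≤ j then t j else 0) = 0 := by
          apply Finset.sum_eq_zero
          intro j hj
          have hjd : j ∈ descSet w := (descSet_finite hw).mem_toFinset.1 hj
          have := hdesc_lt j hjd
          rw [if_neg (by omega)]
        rw [h1, h2, add_zero]
    | succ d ih =>
        intro r hr
        by_cases hc : M ≤ r + d
        · exact ih r hc
        · have IH := ih (r+1) (by omega)
          have hstep : BS (r+1) (S w) = BS r (S w) + (if w (r+1) < w r then t r else 0) := by
            have h2 := BS_succ_sub r (S w)
            rw [hdd w hw r] at h2
            by_cases hd : w (r+1) < w r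
            · rw [if_pos hd] at h2 ⊢
              rw [ht]
              linear_combination h2
            · rw [if_neg hd] at h2 ⊢
              rw [map_zero, mul_zero] at h2
              linear_combination h2
          have hsplit : ∀ j, (if r ≤ j then t j else 0)
              = (if r+1 ≤ j then t j else 0) + (if j = r then t j else 0) := by
            intro j
            rcases lt_trichotomy j r with h | rfl | h
            · rw [if_neg (by omega), if_neg (by omega), if_neg (by omega)]; ring
            · rw [if_pos le_rfl, if_neg (by omega), if_pos rfl]; ring
            · rw [if_pos (by omega), if_pos (by omega), if_neg (by omega)]; ring
          have hsum : ∑ j ∈ DF, (if r ≤ j then t j else 0)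
              = (if w (r+1) < w r then t r else 0) + ∑ j ∈ DF, (if r+1 ≤ j then t j else 0) := by
            rw [Finset.sum_congr rfl (fun j _ => hsplit j), Finset.sum_add_distrib,
              Finset.sum_ite_eq' DF r t]
            have hmem : r ∈ DF ↔ w (r+1) < w r := by
              rw [hDF, Set.Finite.mem_toFinset]
              exact Iff.rfl
            by_cases hd : w (r+1) < w r
            · rw [if_pos (hmem.2 hd), if_pos hd]; ring
            · rw [if_neg (fun hh => hd (hmem.1 hh)), if_neg hd]; ring
          linear_combination IH + hstep - hsum
  have P0 := key M 0 (by omega)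
  have hcc : constantCoeff (S w) = 0 := by
    have hh := hhom w hw
    have hlen := len_pos hw hne
    have h0 : (0 : ℕ →₀ ℕ).degree ≠ len w := by
      rw [map_zero]
      omega
    have := hh.coeff_eq_zero h0
    rw [constantCoeff_eq]
    exact this
  have hsimp : ∀ j ∈ DF, (if 0 ≤ j then t j else 0) = t j := fun j _ => if_pos (Nat.zero_le j)
  rw [Finset.sum_congr rfl hsimp] at P0
  have hsum0 : S w - BS 0 (S w) = ∑ j ∈ DF, t j := by linear_combination P0
  have hZ := Zop_telescope hcc
  rw [hsum0, Zop_finset_sum DF t (fun j _ => constantCoeff_crea_arg j _)] at hZ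
  calc S w = ∑ j ∈ DF, Zop (t j) := hZ.symm
  _ = ∑ᶠ j ∈ (DF : Set ℕ), Zop (t j) := (finsum_mem_coe_finset _ _).symm
  _ = ∑ᶠ j ∈ descSet w, crea j (S (w * Equiv.swap j (j+1))) := by
      rw [hDF, Set.Finite.coe_toFinset]
      exact finsum_mem_congr rfl (fun j _ => rfl)

end
lemma main_aux {S : Equiv.Perm ℕ → Pol} (hS : IsSchubertFamily S) :
    ∀ n (w : Equiv.Perm ℕ), FinSupp w → len w ≤ n →
      S w = ∑ᶠ l ∈ Red w, l.foldl (fun g i => crea i g) 1 := by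
  intro n
  induction n with
  | zero =>
      intro w hw hl
      have hw1 : w = 1 := by
        by_contra hne
        have := len_pos hw hne
        omega
      subst hw1
      rw [Red_one, finsum_mem_singleton]
      simpa using hS.2.1
  | succ n ih =>
      intro w hw hl
      rcases eq_or_ne w 1 with rfl | hne
      · rw [Red_one, finsum_mem_singleton]
        simpa using hS.2.1
      · rw [Fsum_decomp hw hne, star hS hw hne]
        apply finsum_mem_congr rfl
        intro j hj
        have hfsj : FinSupp (w * swapL j) := finSupp_mul_swap hw j
        have hlend : len (w * swapL j) + 1 = len w := len_mul_swap_desc hw hj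
        have hIH := ih (w * swapL j) hfsj (by omega)
        have hfold : ∀ l : List ℕ, (l ++ [j]).foldl (fun g i => crea i g) 1
            = crea j (l.foldl (fun g i => crea i g) 1) := by
          intro l
          rw [List.foldl_append]
          rfl
        have e1 : ∑ᶠ l ∈ Red (w * swapL j), (l ++ [j]).foldl (fun g i => crea i g) 1
            = ∑ᶠ l ∈ Red (w * swapL j), crea j (l.foldl (fun g i => crea i g) 1) :=
          finsum_mem_congr rfl (fun l _ => hfold l)
        have hfin : (Red (w * swapL j)).Finite := Red_finite _ _ hfsj rfl
        calc crea j (S (w * Equiv.swap j (j+1)))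
            = crea j (∑ᶠ l ∈ Red (w * swapL j), l.foldl (fun g i => crea i g) 1) := by rw [← hIH]
        _ = crea j (∑ l ∈ hfin.toFinset, l.foldl (fun g i => crea i g) 1) := by
              rw [← finsum_mem_coe_finset, hfin.coe_toFinset]
        _ = ∑ l ∈ hfin.toFinset, crea j (l.foldl (fun g i => crea i g) 1) := crea_sum _ _ _
        _ = ∑ᶠ l ∈ Red (w * swapL j), crea j (l.foldl (fun g i => crea i g) 1) := by
              rw [← finsum_mem_coe_finset, hfin.coe_toFinset]
        _ = ∑ᶠ l ∈ Red (w * swapL j), (l ++ [j]).foldl (fun g i => crea i g) 1 := e1.symm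


/-- the monomial-positive expansion of a Schubert polynomial via the
creation operators `Z∘x_i∘R_i`, summed over reduced words. -/
theorem stmt_3 (S : Equiv.Perm ℕ → Pol) (hS : IsSchubertFamily S)
    (w : Equiv.Perm ℕ) (hw : FinSupp w) :
    S w = ∑ᶠ l ∈ Red w, l.foldl (fun g i => crea i g) 1 :=
  main_aux hS (len w) w hw le_rfl
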